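/- Let Ω be symmetric positive definite m×m, G of size m×p with full column rank, Σ = (G'Ω^{-1}G)^{-1}, H = Ω^{-1}GΣ, and Q = I − Ω^{-1/2}GΣG'Ω^{-1/2}. Then for any ĝ¹, ĝ² ∈ ℝ^m, 0 < k < n, with ĝ = (kĝ¹ + (n−k)ĝ²)/n, W¹ = (k/√n) Ω^{-1/2}ĝ¹, W = √n Ω^{-1/2}ĝ, and r = k/n: (k/2)(ĝ¹)'Ω^{-1}ĝ¹ + ((n−k)/2)(ĝ²)'Ω^{-1}ĝ² − (n/2)ĝ'HΣ^{-1}H'ĝ = ‖W¹ − rW‖²/(2r(1−r)) + (1/2) W'QW. -/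

import Mathlib

open Matrix

/-- Brownian-bridge decomposition of the saddle-point value: with `S = Ω^{-1/2}`,
`W¹ = (k/√n) S ĝ¹`, `W = √n S ĝ`, `r = k/n` and
`Q = I − S G Σ G' S`,
`(k/2)(ĝ¹)'Ω⁻¹ĝ¹ + ((n−k)/2)(ĝ²)'Ω⁻¹ĝ² − (n/2)ĝ'HΣ⁻¹H'ĝ
  = ‖W¹ − rW‖²/(2r(1−r)) + (1/2) W'QW`. -/
lemma mulVec_eq_zero_of_rank {m p : ℕ} (G : Matrix (Fin m) (Fin p) ℝ) (hG : G.rank = p)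
    {x : Fin p → ℝ} (hx : G.mulVec x = 0) : x = 0 := by
  have h := LinearMap.finrank_range_add_finrank_ker G.mulVecLin
  have hfr : Module.finrank ℝ (Fin p → ℝ) = p := Module.finrank_fin_fun ℝ
  rw [hfr] at h
  have hrank : Module.finrank ℝ (LinearMap.range G.mulVecLin) = p := hG
  have hker : Module.finrank ℝ (LinearMap.ker G.mulVecLin) = 0 := by omega
  have hbot : LinearMap.ker G.mulVecLin = ⊥ := Submodule.finrank_eq_zero.mp hker
  have : x ∈ LinearMap.ker G.mulVecLin := by
    simp [LinearMap.mem_ker, Matrix.mulVecLin_apply, hx]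
  rw [hbot] at this
  simpa using this

lemma dotsym {m : ℕ} (A : Matrix (Fin m) (Fin m) ℝ) (hA : Aᵀ = A) (u v : Fin m → ℝ) :
    u ⬝ᵥ A *ᵥ v = v ⬝ᵥ A *ᵥ u := by
  rw [Matrix.dotProduct_mulVec]
  conv_lhs => rw [← hA]
  rw [Matrix.vecMul_transpose, dotProduct_comm]

lemma posdef_GAG {m p : ℕ} (Om : Matrix (Fin m) (Fin m) ℝ) (hOm : Om.PosDef)
    (G : Matrix (Fin m) (Fin p) ℝ) (hG : G.rank = p) :
    (Gᵀ * Om⁻¹ * G).PosDef := by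
  have hA : Om⁻¹.PosDef := hOm.inv
  have hherm : (Gᴴ * Om⁻¹ * G).IsHermitian :=
    Matrix.isHermitian_conjTranspose_mul_mul G hA.isHermitian
  refine Matrix.PosDef.of_dotProduct_mulVec_pos ?_ ?_
  · simpa [Matrix.conjTranspose_eq_transpose_of_trivial] using hherm
  · intro x hx
    have hGx : G *ᵥ x ≠ 0 := fun h => hx (mulVec_eq_zero_of_rank G hG h)
    have := hA.dotProduct_mulVec_pos hGx
    simp only [star_trivial] at this ⊢
    rw [← Matrix.mulVec_mulVec, ← Matrix.mulVec_mulVec, Matrix.dotProduct_mulVec,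
      Matrix.vecMul_transpose]
    exact this

theorem stmt_9 (m p k n : ℕ) (hk : 0 < k) (hkn : k < n)
    (Om : Matrix (Fin m) (Fin m) ℝ) (hOm : Om.PosDef) (hOmSym : Om.IsSymm)
    (G : Matrix (Fin m) (Fin p) ℝ) (hG : G.rank = p)
    (S : Matrix (Fin m) (Fin m) ℝ) (hS : S.PosDef) (hSsym : S.IsSymm)
    (hSS : S * S = Om⁻¹)
    (Sig : Matrix (Fin p) (Fin p) ℝ) (hSig : Sig = (Gᵀ * Om⁻¹ * G)⁻¹)
    (H : Matrix (Fin m) (Fin p) ℝ) (hH : H = Om⁻¹ * G * Sig)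
    (Q : Matrix (Fin m) (Fin m) ℝ) (hQ : Q = 1 - S * G * Sig * Gᵀ * S)
    (g1 g2 : Fin m → ℝ)
    (ghat : Fin m → ℝ)
    (hghat : ghat = ((k : ℝ) / (n : ℝ)) • g1 + (((n : ℝ) - (k : ℝ)) / (n : ℝ)) • g2)
    (W1 W : Fin m → ℝ) (r : ℝ)
    (hW1 : W1 = ((k : ℝ) / Real.sqrt n) • S.mulVec g1)
    (hW : W = Real.sqrt n • S.mulVec ghat)
    (hr : r = (k : ℝ) / (n : ℝ)) :
    ((k : ℝ) / 2) * (g1 ⬝ᵥ Om⁻¹.mulVec g1) +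
      (((n : ℝ) - (k : ℝ)) / 2) * (g2 ⬝ᵥ Om⁻¹.mulVec g2) -
      ((n : ℝ) / 2) * (ghat ⬝ᵥ (H * Sig⁻¹ * Hᵀ).mulVec ghat) =
    ((W1 - r • W) ⬝ᵥ (W1 - r • W)) / (2 * r * (1 - r)) +
      (1 / 2) * (W ⬝ᵥ Q.mulVec W) := by
  set A := Om⁻¹ with hAdef
  have hnpos : (0 : ℝ) < n := by exact_mod_cast hk.trans hkn
  have hn0 : (n : ℝ) ≠ 0 := hnpos.ne'
  have hkpos : (0 : ℝ) < k := by exact_mod_cast hk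
  have hknR : (k : ℝ) < n := by exact_mod_cast hkn
  have hr0 : 0 < r := by rw [hr]; positivity
  have hr1 : r < 1 := by rw [hr, div_lt_one hnpos]; exact hknR
  have hsn : Real.sqrt n ≠ 0 := by positivity
  have hsq : Real.sqrt n * Real.sqrt n = n := Real.mul_self_sqrt hnpos.le
  -- symmetry of A
  have hAsym : Aᵀ = A := by
    rw [hAdef, Matrix.transpose_nonsing_inv, hOmSym.eq]
  have hSsym' : Sᵀ = S := hSsym.eq
  -- positive definiteness of N = Gᵀ A G
  have hN : (Gᵀ * A * G).PosDef := posdef_GAG Om hOm G hG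
  have hNdet : IsUnit (Gᵀ * A * G).det := hN.det_pos.ne'.isUnit
  have hSigInv : Sig⁻¹ = Gᵀ * A * G := by
    rw [hSig, Matrix.nonsing_inv_nonsing_inv _ hNdet]
  have hSigN : Sig * (Gᵀ * A * G) = 1 := by
    rw [hSig]; exact Matrix.nonsing_inv_mul _ hNdet
  have hSigSym : Sigᵀ = Sig := by
    rw [hSig, Matrix.transpose_nonsing_inv]
    congr 1
    rw [Matrix.transpose_mul, Matrix.transpose_mul, Matrix.transpose_transpose, hAsym,
      Matrix.mul_assoc]
  -- Step A : key matrix identity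
  have key : H * Sig⁻¹ * Hᵀ = A * G * Sig * Gᵀ * A := by
    have hHT : Hᵀ = Sig * Gᵀ * A := by
      rw [hH, Matrix.transpose_mul, Matrix.transpose_mul, hSigSym, hAsym, Matrix.mul_assoc]
    rw [hHT, hH, hSigInv]
    calc A * G * Sig * (Gᵀ * A * G) * (Sig * Gᵀ * A)
        = A * G * (Sig * (Gᵀ * A * G)) * (Sig * Gᵀ * A) := by
          simp only [Matrix.mul_assoc]
      _ = A * G * Sig * Gᵀ * A := by rw [hSigN]; simp only [Matrix.mul_one, Matrix.mul_assoc]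
  set M := A * G * Sig * Gᵀ * A with hMdef
  -- symmetric S dot fact
  have hSdot : ∀ u v : Fin m → ℝ, (S *ᵥ u) ⬝ᵥ v = u ⬝ᵥ (S *ᵥ v) := by
    intro u v
    rw [dotProduct_comm, dotsym S hSsym' v u, dotProduct_comm]
  -- Step C : W' Q W
  have hSMS : S * (S * G * Sig * Gᵀ * S * S) = M := by
    rw [hMdef, ← hSS]
    simp only [Matrix.mul_assoc]
  have hWQW : W ⬝ᵥ Q *ᵥ W = n * (ghat ⬝ᵥ A *ᵥ ghat) - n * (ghat ⬝ᵥ M *ᵥ ghat) := by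
    rw [hQ, Matrix.sub_mulVec, Matrix.one_mulVec, dotProduct_sub, hW]
    have hWW : (Real.sqrt n • S *ᵥ ghat) ⬝ᵥ (Real.sqrt n • S *ᵥ ghat)
        = n * (ghat ⬝ᵥ A *ᵥ ghat) := by
      rw [smul_dotProduct, dotProduct_smul, smul_eq_mul, smul_eq_mul, ← mul_assoc, hsq,
        hSdot, Matrix.mulVec_mulVec, hSS]
    have hWPW : (Real.sqrt n • S *ᵥ ghat) ⬝ᵥ (S * G * Sig * Gᵀ * S) *ᵥ
        (Real.sqrt n • S *ᵥ ghat) = n * (ghat ⬝ᵥ M *ᵥ ghat) := by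
      rw [Matrix.mulVec_smul, smul_dotProduct, dotProduct_smul, smul_eq_mul, smul_eq_mul,
        ← mul_assoc, hsq, Matrix.mulVec_mulVec, hSdot, Matrix.mulVec_mulVec, hSMS]
    rw [hWW, hWPW]
  -- Step D : W1 - r W
  have hcoef : (k : ℝ) / Real.sqrt n = r * Real.sqrt n := by
    rw [hr, div_mul_eq_mul_div, div_eq_div_iff hsn hn0]
    linear_combination (-1 : ℝ) * (k : ℝ) * hsq
  have hs2 : ((n : ℝ) - k) / n = 1 - r := by rw [hr]; field_simp
  have hD : W1 - r • W = (r * (1 - r) * Real.sqrt n) • (S *ᵥ (g1 - g2)) := by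
    rw [hW1, hW, hghat, Matrix.mulVec_add, Matrix.mulVec_smul, Matrix.mulVec_smul,
      Matrix.mulVec_sub, hcoef, hs2, ← hr]
    module
  have hDD : (W1 - r • W) ⬝ᵥ (W1 - r • W)
      = (r * (1 - r) * Real.sqrt n) ^ 2 * ((g1 - g2) ⬝ᵥ A *ᵥ (g1 - g2)) := by
    rw [hD, smul_dotProduct, dotProduct_smul, smul_eq_mul, smul_eq_mul, ← mul_assoc, ← sq,
      hSdot, Matrix.mulVec_mulVec, hSS]
  -- bilinear expansions
  have hcross : g2 ⬝ᵥ A *ᵥ g1 = g1 ⬝ᵥ A *ᵥ g2 := dotsym A hAsym g2 g1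
  have hdexp : (g1 - g2) ⬝ᵥ A *ᵥ (g1 - g2)
      = g1 ⬝ᵥ A *ᵥ g1 - 2 * (g1 ⬝ᵥ A *ᵥ g2) + g2 ⬝ᵥ A *ᵥ g2 := by
    rw [Matrix.mulVec_sub, sub_dotProduct, dotProduct_sub, dotProduct_sub, hcross]
    ring
  have hEexp : ghat ⬝ᵥ A *ᵥ ghat
      = r ^ 2 * (g1 ⬝ᵥ A *ᵥ g1) + 2 * r * (1 - r) * (g1 ⬝ᵥ A *ᵥ g2)
        + (1 - r) ^ 2 * (g2 ⬝ᵥ A *ᵥ g2) := by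
    rw [hghat, hs2, ← hr]
    simp only [Matrix.mulVec_add, Matrix.mulVec_smul, dotProduct_add, add_dotProduct,
      smul_dotProduct, dotProduct_smul, smul_eq_mul, hcross]
    ring
  -- put it together
  rw [key, hWQW, hDD, hdexp, hEexp]
  have hsq2 : (r * (1 - r) * Real.sqrt n) ^ 2 = r ^ 2 * (1 - r) ^ 2 * (n : ℝ) := by
    rw [mul_pow, mul_pow, sq (Real.sqrt (n : ℝ)), hsq]
  rw [hsq2]
  subst hr
  have hk0 : (k : ℝ) ≠ 0 := hkpos.ne'
  have hnk : (n : ℝ) - k ≠ 0 := sub_ne_zero.mpr hknR.ne'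
  field_simp
  ring
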